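/- Let q = 2^m with m > 3. For any two distinct fixed elements x_1, x_2 ∈ F_q^*, the number of unordered triples {x_3, x_4, x_5} such that x_1, ..., x_5 are pairwise distinct nonzero elements of F_q and x_1 + x_2 + x_3 + x_4 + x_5 = 0 equals (q-4)(q-8)/6. -/

import Mathlib

set_option maxHeartbeats 1000000 in
theorem stmt15 (m : ℕ) (hm : 3 < m)
    (F : Type*) [Field F] [Fintype F] [DecidableEq F]
    (hF : Fintype.card F = 2 ^ m)
    (x₁ x₂ : F) (h1 : x₁ ≠ 0) (h2 : x₂ ≠ 0) (h12 : x₁ ≠ x₂) :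
    {s : Finset F | s.card = 3 ∧ (0 : F) ∉ s ∧ x₁ ∉ s ∧ x₂ ∉ s ∧
      x₁ + x₂ + ∑ x ∈ s, x = 0}.ncard
      = (2 ^ m - 4) * (2 ^ m - 8) / 6 := by
  classical
  -- characteristic 2
  have hchar : ringChar F = 2 := by
    obtain ⟨n, hp, hcard⟩ := FiniteField.card F (ringChar F)
    have hdvd : ringChar F ∣ 2 ^ m := by
      rw [← hF, hcard]
      exact dvd_pow_self _ n.2.ne'
    exact (Nat.prime_dvd_prime_iff_eq hp Nat.prime_two).mp (hp.dvd_of_dvd_pow hdvd)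
  haveI hC : CharP F 2 := hchar ▸ ringChar.charP F
  have htwo : (2 : F) = 0 := CharTwo.two_eq_zero
  have hadd : ∀ a b : F, a + b = 0 ↔ a = b := by
    intro a b
    constructor
    · intro h; linear_combination h - b * htwo
    · intro h; linear_combination h + b * htwo
  set e := x₁ + x₂ with he
  have he0 : e ≠ 0 := by
    intro h; rw [he] at h; exact h12 ((hadd _ _).mp h)
  have he1 : e ≠ x₁ := by
    intro h; exact h2 (by linear_combination h - he)
  have he2 : e ≠ x₂ := by
    intro h; exact h1 (by linear_combination h - he)
  have hq16 : 16 ≤ 2 ^ m := by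
    calc (16 : ℕ) = 2 ^ 4 := by norm_num
    _ ≤ 2 ^ m := Nat.pow_le_pow_right (by norm_num) hm
  -- The ambient finset B
  set B : Finset F := Finset.univ \ {0, x₁, x₂, e} with hB
  have hmemB : ∀ a : F, a ∈ B ↔ a ≠ 0 ∧ a ≠ x₁ ∧ a ≠ x₂ ∧ a ≠ e := by
    intro a
    simp only [hB, Finset.mem_sdiff, Finset.mem_univ, true_and, Finset.mem_insert,
      Finset.mem_singleton]
    push_neg
    tauto
  have hBcard : B.card = 2 ^ m - 4 := by
    rw [hB, Finset.card_sdiff_of_subset (Finset.subset_univ _), Finset.card_univ, hF]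
    congr 1
    rw [Finset.card_insert_of_notMem (by
        simp only [Finset.mem_insert, Finset.mem_singleton]
        push_neg
        exact ⟨h1.symm, h2.symm, he0.symm⟩),
      Finset.card_insert_of_notMem (by
        simp only [Finset.mem_insert, Finset.mem_singleton]
        push_neg
        exact ⟨h12, he1.symm⟩),
      Finset.card_insert_of_notMem (by
        simp only [Finset.mem_singleton]
        exact he2.symm),
      Finset.card_singleton]
  -- translations preserve B
  have hBe : ∀ a : F, a ∈ B → a + e ∈ B := by
    intro a ha
    rw [hmemB] at ha ⊢
    obtain ⟨h0, hx1, hx2, hee⟩ := ha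
    refine ⟨fun h => hee ?_, fun h => hx2 ?_, fun h => hx1 ?_, fun h => h0 ?_⟩
    · linear_combination h - e * htwo
    · linear_combination h - he - x₂ * htwo
    · linear_combination h - he - x₁ * htwo
    · linear_combination h
  have hB1 : ∀ a : F, a ∈ B → a + x₁ ∈ B := by
    intro a ha
    rw [hmemB] at ha ⊢
    obtain ⟨h0, hx1, hx2, hee⟩ := ha
    refine ⟨fun h => hx1 ?_, fun h => h0 ?_, fun h => hee ?_, fun h => hx2 ?_⟩
    · linear_combination h - x₁ * htwo
    · linear_combination h
    · linear_combination h - he - x₁ * htwo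
    · linear_combination h + he
  have hB2 : ∀ a : F, a ∈ B → a + x₂ ∈ B := by
    intro a ha
    rw [hmemB] at ha ⊢
    obtain ⟨h0, hx1, hx2, hee⟩ := ha
    refine ⟨fun h => hx2 ?_, fun h => hee ?_, fun h => h0 ?_, fun h => hx1 ?_⟩
    · linear_combination h - x₂ * htwo
    · linear_combination h - he - x₂ * htwo
    · linear_combination h
    · linear_combination h + he
  -- forbidden partners of a
  set D : F → Finset F := fun a => {a, a + e, a + x₁, a + x₂} with hD
  have hDsub : ∀ a : F, a ∈ B → D a ⊆ B := by
    intro a ha z hz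
    simp only [hD, Finset.mem_insert, Finset.mem_singleton] at hz
    rcases hz with rfl | rfl | rfl | rfl
    · exact ha
    · exact hBe a ha
    · exact hB1 a ha
    · exact hB2 a ha
  have hDcard : ∀ a : F, (D a).card = 4 := by
    intro a
    rw [hD]
    rw [Finset.card_insert_of_notMem (by
        simp only [Finset.mem_insert, Finset.mem_singleton]
        push_neg
        refine ⟨fun h => he0 ?_, fun h => h1 ?_, fun h => h2 ?_⟩
        · linear_combination -h
        · linear_combination -h
        · linear_combination -h),
      Finset.card_insert_of_notMem (by
        simp only [Finset.mem_insert, Finset.mem_singleton]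
        push_neg
        refine ⟨fun h => he1 ?_, fun h => he2 ?_⟩
        · linear_combination h
        · linear_combination h),
      Finset.card_insert_of_notMem (by
        simp only [Finset.mem_singleton]
        intro h
        exact h12 (by linear_combination h)),
      Finset.card_singleton]
  -- ordered pairs
  set T : Finset (F × F) :=
    (B ×ˢ B).filter (fun p => p.1 ≠ p.2 ∧ p.1 + p.2 ≠ e ∧ p.1 + p.2 ≠ x₁ ∧ p.1 + p.2 ≠ x₂)
    with hT
  have hmemT : ∀ u v : F, (u, v) ∈ T ↔
      u ∈ B ∧ v ∈ B ∧ u ≠ v ∧ u + v ≠ e ∧ u + v ≠ x₁ ∧ u + v ≠ x₂ := by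
    intro u v
    simp only [hT, Finset.mem_filter, Finset.mem_product]
    tauto
  -- cardinality of T
  have hTcard : T.card = (2 ^ m - 4) * (2 ^ m - 8) := by
    have hfib : ∀ p ∈ T, p.1 ∈ B := by
      rintro ⟨u, v⟩ hp
      exact ((hmemT u v).mp hp).1
    rw [Finset.card_eq_sum_card_fiberwise hfib]
    have hfc : ∀ a ∈ B, (T.filter fun p => p.1 = a).card = 2 ^ m - 8 := by
      intro a ha
      have himg : (T.filter fun p => p.1 = a) = (B \ D a).image (fun b => (a, b)) := by
        ext ⟨u, v⟩
        simp only [Finset.mem_filter, Finset.mem_image, Finset.mem_sdiff, hD,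
          Finset.mem_insert, Finset.mem_singleton, Prod.mk.injEq]
        constructor
        · rintro ⟨hpT, rfl⟩
          rw [hmemT] at hpT
          obtain ⟨huB, hvB, huv, hse, hs1, hs2⟩ := hpT
          refine ⟨v, ⟨hvB, ?_⟩, rfl, rfl⟩
          push_neg
          refine ⟨fun h => huv h.symm, fun h => hse ?_, fun h => hs1 ?_, fun h => hs2 ?_⟩
          · linear_combination h + u * htwo
          · linear_combination h + u * htwo
          · linear_combination h + u * htwo
        · rintro ⟨b, ⟨hbB, hbD⟩, rfl, rfl⟩
          push_neg at hbD
          obtain ⟨hd1, hd2, hd3, hd4⟩ := hbD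
          refine ⟨(hmemT a b).mpr ⟨ha, hbB, fun h => hd1 h.symm, fun h => hd2 ?_,
            fun h => hd3 ?_, fun h => hd4 ?_⟩, rfl⟩
          · linear_combination h - a * htwo
          · linear_combination h - a * htwo
          · linear_combination h - a * htwo
      rw [himg, Finset.card_image_of_injective _ (fun b c h => (Prod.mk.injEq _ _ _ _).mp h |>.2),
        Finset.card_sdiff_of_subset (hDsub a ha), hBcard, hDcard]
      omega
    rw [Finset.sum_congr rfl hfc, Finset.sum_const, smul_eq_mul, hBcard]
  -- the target finset of triples
  set S : Finset (Finset F) :=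
    Finset.univ.filter
      (fun t => t.card = 3 ∧ (0 : F) ∉ t ∧ x₁ ∉ t ∧ x₂ ∉ t ∧ ∑ x ∈ t, x = e)
    with hS
  have hmemS : ∀ t : Finset F, t ∈ S ↔
      t.card = 3 ∧ (0 : F) ∉ t ∧ x₁ ∉ t ∧ x₂ ∉ t ∧ ∑ x ∈ t, x = e := by
    intro t
    simp only [hS, Finset.mem_filter, Finset.mem_univ, true_and]
  -- the map from pairs to triples
  set f : F × F → Finset F := fun p => insert p.1 (insert p.2 {p.1 + p.2 + e}) with hf
  have keyA : ∀ p ∈ T, f p ∈ S := by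
    rintro ⟨u, v⟩ hp
    rw [hmemT] at hp
    obtain ⟨huB, hvB, huv, hse, hs1, hs2⟩ := hp
    obtain ⟨hu0, hu1, hu2, hue⟩ := (hmemB u).mp huB
    obtain ⟨hv0, hv1, hv2, hve⟩ := (hmemB v).mp hvB
    have huw : u ≠ u + v + e := fun h => hve (by linear_combination -h - e * htwo)
    have hvw : v ≠ u + v + e := fun h => hue (by linear_combination -h - e * htwo)
    have hnm1 : u ∉ insert v ({u + v + e} : Finset F) := by
      simp only [Finset.mem_insert, Finset.mem_singleton]
      push_neg
      exact ⟨huv, huw⟩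
    have hnm2 : v ∉ ({u + v + e} : Finset F) := by
      simp only [Finset.mem_singleton]
      exact hvw
    rw [hmemS, hf]
    refine ⟨?_, ?_, ?_, ?_, ?_⟩
    · rw [Finset.card_insert_of_notMem hnm1, Finset.card_insert_of_notMem hnm2,
        Finset.card_singleton]
    · simp only [Finset.mem_insert, Finset.mem_singleton]
      push_neg
      exact ⟨hu0.symm, hv0.symm, fun h => hse (by linear_combination -h - e * htwo)⟩
    · simp only [Finset.mem_insert, Finset.mem_singleton]
      push_neg
      exact ⟨hu1.symm, hv1.symm, fun h => hs2 (by linear_combination -h - he - x₂ * htwo)⟩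
    · simp only [Finset.mem_insert, Finset.mem_singleton]
      push_neg
      exact ⟨hu2.symm, hv2.symm, fun h => hs1 (by linear_combination -h - he - x₁ * htwo)⟩
    · rw [Finset.sum_insert hnm1, Finset.sum_insert hnm2, Finset.sum_singleton]
      linear_combination (u + v) * htwo
  have keyB : ∀ t ∈ S, (T.filter fun p => f p = t).card = 6 := by
    intro t ht
    rw [hmemS] at ht
    obtain ⟨hc, h0t, h1t, h2t, hsum⟩ := ht
    obtain ⟨a, b, c, hab, hac, hbc, rfl⟩ := Finset.card_eq_three.mp hc
    have hnma : a ∉ insert b ({c} : Finset F) := by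
      simp only [Finset.mem_insert, Finset.mem_singleton]
      push_neg
      exact ⟨hab, hac⟩
    have hnmb : b ∉ ({c} : Finset F) := by
      simp only [Finset.mem_singleton]; exact hbc
    rw [Finset.sum_insert hnma, Finset.sum_insert hnmb, Finset.sum_singleton] at hsum
    -- {a,b,c} ⊆ B
    have tB : (insert a (insert b ({c} : Finset F))) ⊆ B := by
      intro z hz
      simp only [Finset.mem_insert, Finset.mem_singleton] at hz
      rw [hmemB]
      rcases hz with rfl | rfl | rfl
      · refine ⟨fun h => h0t ?_, fun h => h1t ?_, fun h => h2t ?_,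
          fun h => hbc (by linear_combination hsum - h - c * htwo)⟩
        all_goals (rw [h]; simp)
      · refine ⟨fun h => h0t ?_, fun h => h1t ?_, fun h => h2t ?_,
          fun h => hac (by linear_combination hsum - h - c * htwo)⟩
        all_goals (rw [h]; simp)
      · refine ⟨fun h => h0t ?_, fun h => h1t ?_, fun h => h2t ?_,
          fun h => hab (by linear_combination hsum - h - b * htwo)⟩
        all_goals (rw [h]; simp)
    have haB : a ∈ B := tB (by simp)
    have hbB : b ∈ B := tB (by simp)
    have hcB : c ∈ B := tB (by simp)
    -- the key sub-lemma
    have key : ∀ u v z : F, u ∈ B → v ∈ B → z ∈ B → u ≠ v → u + v + e = z →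
        (u, v) ∈ T ∧ f (u, v) = insert u (insert v ({z} : Finset F)) := by
      intro u v z huB hvB hzB huv hw
      obtain ⟨hz0, hz1, hz2, hze⟩ := (hmemB z).mp hzB
      constructor
      · rw [hmemT]
        refine ⟨huB, hvB, huv, fun h => hz0 ?_, fun h => hz2 ?_, fun h => hz1 ?_⟩
        · linear_combination -hw + h + e * htwo
        · linear_combination h + he - hw + x₁ * htwo
        · linear_combination h + he - hw + x₂ * htwo
      · simp only [hf]
        rw [hw]
    have hperm : ∀ u v z : F, (insert u (insert v ({z} : Finset F)))
        = insert u (insert z ({v} : Finset F)) := by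
      intro u v z; ext w; simp only [Finset.mem_insert, Finset.mem_singleton]; tauto
    have hperm2 : ∀ u v z : F, (insert u (insert v ({z} : Finset F)))
        = insert v (insert u ({z} : Finset F)) := by
      intro u v z; ext w; simp only [Finset.mem_insert, Finset.mem_singleton]; tauto
    -- fiber is the off-diagonal
    have hfib : (T.filter fun p => f p = insert a (insert b ({c} : Finset F)))
        = (insert a (insert b ({c} : Finset F))).offDiag := by
      ext ⟨u, v⟩
      rw [Finset.mem_filter, Finset.mem_offDiag]
      constructor
      · rintro ⟨hpT, hft⟩
        rw [hmemT] at hpT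
        refine ⟨?_, ?_, hpT.2.2.1⟩
        · rw [← hft, hf]; simp
        · rw [← hft, hf]; simp
      · rintro ⟨hu, hv, huv⟩
        simp only [Finset.mem_insert, Finset.mem_singleton] at hu hv
        rcases hu with rfl | rfl | rfl <;> rcases hv with rfl | rfl | rfl
        · exact absurd rfl huv
        · obtain ⟨hT', hs'⟩ := key u v c haB hbB hcB huv
            (by linear_combination (u + v) * htwo - hsum)
          refine ⟨hT', ?_⟩
          rw [hs']; try (ext w; simp only [Finset.mem_insert, Finset.mem_singleton]; tauto)
        · obtain ⟨hT', hs'⟩ := key u v b haB hcB hbB huv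
            (by linear_combination (u + v) * htwo - hsum)
          refine ⟨hT', ?_⟩
          rw [hs']; try (ext w; simp only [Finset.mem_insert, Finset.mem_singleton]; tauto)
        · obtain ⟨hT', hs'⟩ := key u v c hbB haB hcB huv
            (by linear_combination (u + v) * htwo - hsum)
          refine ⟨hT', ?_⟩
          rw [hs']; try (ext w; simp only [Finset.mem_insert, Finset.mem_singleton]; tauto)
        · exact absurd rfl huv
        · obtain ⟨hT', hs'⟩ := key u v a hbB hcB haB huv
            (by linear_combination (u + v) * htwo - hsum)
          refine ⟨hT', ?_⟩
          rw [hs']; try (ext w; simp only [Finset.mem_insert, Finset.mem_singleton]; tauto)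
        · obtain ⟨hT', hs'⟩ := key u v b hcB haB hbB huv
            (by linear_combination (u + v) * htwo - hsum)
          refine ⟨hT', ?_⟩
          rw [hs']; try (ext w; simp only [Finset.mem_insert, Finset.mem_singleton]; tauto)
        · obtain ⟨hT', hs'⟩ := key u v a hcB hbB haB huv
            (by linear_combination (u + v) * htwo - hsum)
          refine ⟨hT', ?_⟩
          rw [hs']; try (ext w; simp only [Finset.mem_insert, Finset.mem_singleton]; tauto)
        · exact absurd rfl huv
    rw [hfib, Finset.offDiag_card, hc]
  -- counting
  have hTS : T.card = S.card * 6 := by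
    rw [Finset.card_eq_sum_card_fiberwise keyA, Finset.sum_congr rfl keyB,
      Finset.sum_const, smul_eq_mul]
  have hScard6 : S.card * 6 = (2 ^ m - 4) * (2 ^ m - 8) := by
    rw [← hTS, hTcard]
  -- rewrite the set as the coe of S
  have hsetEq : {s : Finset F | s.card = 3 ∧ (0 : F) ∉ s ∧ x₁ ∉ s ∧ x₂ ∉ s ∧
      e + ∑ x ∈ s, x = 0} = ↑S := by
    ext t
    simp only [Set.mem_setOf_eq, Finset.coe_filter, hS, Finset.mem_univ, true_and,
      Set.mem_setOf_eq]
    constructor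
    · rintro ⟨hc, h0, hx1, hx2, hsum⟩
      exact ⟨hc, h0, hx1, hx2, ((hadd _ _).mp hsum).symm⟩
    · rintro ⟨hc, h0, hx1, hx2, hsum⟩
      exact ⟨hc, h0, hx1, hx2, (hadd _ _).mpr hsum.symm⟩
  rw [hsetEq, Set.ncard_coe_finset]
  generalize hN : (2 ^ m - 4) * (2 ^ m - 8) = N at hScard6 ⊢
  omega
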